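/- For every d ≥ 1, the set {1, 2, ..., d} of d cyclically consecutive vertices is a maximal independent set of the Andrásfai graph Γ_d. -/

import Mathlib

/-- The Andrásfai graph `Γ_d`: vertex set `ZMod (3*d-1)`, with `x` adjacent to `y`
iff `y - x ∈ {d, ..., 2*d-1}` (the condition is symmetrized). -/
def andrasfai (d : ℕ) : SimpleGraph (ZMod (3 * d - 1)) where
  Adj x y := x ≠ y ∧ ((d ≤ (y - x).val ∧ (y - x).val ≤ 2 * d - 1) ∨
      (d ≤ (x - y).val ∧ (x - y).val ≤ 2 * d - 1))
  symm := ⟨fun x y h => ⟨h.1.symm, h.2.symm⟩⟩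
  loopless := ⟨fun x h => h.1 rfl⟩
/-- `S` is an independent set of `G`. -/
def IndepSet {V : Type*} (G : SimpleGraph V) (S : Set V) : Prop :=
  S.Pairwise fun a b => ¬ G.Adj a b
/-- The image in `ZMod (3*d-1)` of the natural numbers in `[a, b]`. -/
def castIcc (d a b : ℕ) : Set (ZMod (3 * d - 1)) :=
  (fun i : ℕ => (i : ZMod (3 * d - 1))) '' Set.Icc a b


section aux
variable (d : ℕ)

lemma cast_sub_nat (n a b : ℕ) (h : b ≤ a) :
    (a : ZMod n) - (b : ZMod n) = ((a - b : ℕ) : ZMod n) := by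
  push_cast [h]; ring

lemma cast_sub_nat' (n a b : ℕ) (ha : a ≤ n) (hb : b ≤ n) (h : a ≤ b) :
    (a : ZMod n) - (b : ZMod n) = ((a + (n - b) : ℕ) : ZMod n) := by
  push_cast [hb]
  rw [ZMod.natCast_self]; ring

lemma aux_not_adj (d i j : ℕ) (hd : 1 ≤ d) (hi : 1 ≤ i) (hid : i ≤ d)
    (hj : 1 ≤ j) (hjd : j ≤ d) (hij : i ≤ j) :
    ¬ (andrasfai d).Adj (i : ZMod (3 * d - 1)) (j : ZMod (3 * d - 1)) := by
  have hn : 2 ≤ 3 * d - 1 := by omega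
  haveI : NeZero (3 * d - 1) := ⟨by omega⟩
  rintro ⟨hne, hor⟩
  rcases eq_or_lt_of_le hij with rfl | hlt
  · exact hne rfl
  have h1 : ((j : ZMod (3*d-1)) - i).val = j - i := by
    rw [cast_sub_nat _ _ _ hij, ZMod.val_cast_of_lt (by omega)]
  have h2 : ((i : ZMod (3*d-1)) - j).val = i + (3*d-1 - j) := by
    rw [cast_sub_nat' _ _ _ (by omega) (by omega) hij,
      ZMod.val_cast_of_lt (by omega)]
  rcases hor with ⟨ha, hb⟩ | ⟨ha, hb⟩
  · rw [h1] at ha hb; omega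
  · rw [h2] at ha hb; omega

end aux

theorem castIcc_one_d_maximal_indep (d : ℕ) (hd : 1 ≤ d) :
    IndepSet (andrasfai d) (castIcc d 1 d) ∧
    ∀ S : Set (ZMod (3 * d - 1)), IndepSet (andrasfai d) S → castIcc d 1 d ⊆ S →
      S = castIcc d 1 d := by
  haveI : NeZero (3 * d - 1) := ⟨by omega⟩
  constructor
  · rintro _ ⟨i, ⟨hi1, hi2⟩, rfl⟩ _ ⟨j, ⟨hj1, hj2⟩, rfl⟩ _ hadj
    rcases le_total i j with h | h
    · exact aux_not_adj d i j hd hi1 hi2 hj1 hj2 h hadj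
    · exact aux_not_adj d j i hd hj1 hj2 hi1 hi2 h hadj.symm
  · intro S hS hsub
    refine Set.Subset.antisymm ?_ hsub
    intro v hv
    by_contra hvnot
    set k := v.val with hk
    have hkn : k < 3 * d - 1 := ZMod.val_lt v
    have hveq : ((k : ℕ) : ZMod (3 * d - 1)) = v := ZMod.natCast_rightInverse v
    have hkr : k = 0 ∨ d + 1 ≤ k := by
      by_contra h
      exact hvnot ⟨k, ⟨by omega, by omega⟩, hveq⟩
    -- pick a neighbor j in [1, d]
    have key : ∃ j : ℕ, 1 ≤ j ∧ j ≤ d ∧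
        d ≤ (v - (j : ZMod (3*d-1))).val ∧ (v - (j : ZMod (3*d-1))).val ≤ 2*d-1 := by
      rcases hkr with h0 | hk1
      · refine ⟨d, hd, le_refl d, ?_, ?_⟩ <;>
        · rw [← hveq, h0, cast_sub_nat' (3*d-1) 0 d (by omega) (by omega) (by omega),
            ZMod.val_cast_of_lt (by omega)]
          omega
      · rcases le_or_gt k (2*d) with hk2 | hk2
        · refine ⟨k - d, by omega, by omega, ?_, ?_⟩ <;>
          · rw [← hveq, cast_sub_nat (3*d-1) k (k-d) (by omega),
              ZMod.val_cast_of_lt (by omega)]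
            omega
        · refine ⟨k - (2*d-1), by omega, by omega, ?_, ?_⟩ <;>
          · rw [← hveq, cast_sub_nat (3*d-1) k (k-(2*d-1)) (by omega),
              ZMod.val_cast_of_lt (by omega)]
            omega
    obtain ⟨j, hj1, hjd, hd1, hd2⟩ := key
    have hjS : ((j : ℕ) : ZMod (3*d-1)) ∈ S := hsub ⟨j, ⟨hj1, hjd⟩, rfl⟩
    have hne : v ≠ ((j : ℕ) : ZMod (3*d-1)) := by
      intro h
      have : k = j := by rw [hk, h, ZMod.val_cast_of_lt (by omega)]
      omega
    exact hS hv hjS hne ⟨hne, Or.inr ⟨hd1, hd2⟩⟩
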